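/- If (C, D) is an n×n matrix factorization of a polynomial f and g, h are two polynomials, then the 2n×2n block matrices [[C, -g·I_n],[h·I_n, D]] and [[D, g·I_n],[-h·I_n, C]] form a matrix factorization of f + gh. -/
import Mathlib


open Matrix

/-- If `(C, D)` is an `n×n` matrix factorization of `f` and `g, h` are polynomials,
then the displayed `2n×2n` block matrices form a matrix factorization of `f + gh`. -/
theorem standard_method_step
    {K : Type*} [Field K] {σ : Type*} {n : ℕ}
    (f g h : MvPolynomial σ K)
    (C D : Matrix (Fin n) (Fin n) (MvPolynomial σ K))
    (h1 : C * D = f • 1) (h2 : D * C = f • 1) :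
    fromBlocks C (-(g • 1)) (h • 1) D * fromBlocks D (g • 1) (-(h • 1)) C =
      (f + g * h) • 1 ∧
    fromBlocks D (g • 1) (-(h • 1)) C * fromBlocks C (-(g • 1)) (h • 1) D =
      (f + g * h) • 1 := by
  have sc : ∀ (p : MvPolynomial σ K) (M : Matrix (Fin n) (Fin n) (MvPolynomial σ K)),
      (p • (1 : Matrix (Fin n) (Fin n) (MvPolynomial σ K))) * M = p • M := by
    intro p M; rw [smul_mul_assoc, one_mul]
  have sc' : ∀ (p : MvPolynomial σ K) (M : Matrix (Fin n) (Fin n) (MvPolynomial σ K)),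
      M * (p • (1 : Matrix (Fin n) (Fin n) (MvPolynomial σ K))) = p • M := by
    intro p M; rw [mul_smul_comm, mul_one]
  constructor <;>
  · rw [fromBlocks_multiply, ← fromBlocks_one, fromBlocks_smul]
    congr 1 <;> simp [h1, h2, sc, sc', smul_smul, add_smul, mul_comm g h] <;> abel
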